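/- Let G₁, G₂, G₃ be three connected graphs, each with pathwidth at least k, and let vᵢ ∈ V(Gᵢ) for i = 1, 2, 3. Let G be obtained from the disjoint union of G₁, G₂, G₃ by adding a new vertex v adjacent to v₁, v₂, v₃. Then G has pathwidth at least k+1. -/

import Mathlib

open SimpleGraph Set

/-- `H` is a minor of `G`: there is a model of `H` in `G` given by pairwise disjoint
branch sets, each inducing a connected subgraph, with edges of `H` realized by edges of `G`. -/
def HasMinor {V W : Type*} (G : SimpleGraph V) (H : SimpleGraph W) : Prop :=
  ∃ f : W → Set V,
    (∀ w, ((G.induce (f w)).Connected)) ∧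
    (Pairwise fun w w' => Disjoint (f w) (f w')) ∧
    ∀ ⦃w w'⦄, H.Adj w w' → ∃ a ∈ f w, ∃ b ∈ f w', G.Adj a b

/-- A path decomposition of the part of `G` inside the vertex set `A`, with bags `B 0, …, B (p-1)`. -/
def IsPathDecompOn {V : Type*} (G : SimpleGraph V) (A : Set V) (p : ℕ) (B : Fin p → Set V) : Prop :=
  (∀ i, B i ⊆ A) ∧
  (∀ v ∈ A, ∃ i, v ∈ B i) ∧
  (∀ ⦃u v⦄, G.Adj u v → u ∈ A → v ∈ A → ∃ i, u ∈ B i ∧ v ∈ B i) ∧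
  (∀ v (i j l : Fin p), i ≤ j → j ≤ l → v ∈ B i → v ∈ B l → v ∈ B j)

/-- The pathwidth of `G`: the least `t` such that `G` has a path decomposition of width `t`. -/
noncomputable def pathwidth {V : Type*} (G : SimpleGraph V) : ℕ :=
  sInf {t | ∃ p, ∃ B : Fin p → Set V, IsPathDecompOn G Set.univ p B ∧ ∀ i, (B i).ncard ≤ t + 1}

/-- The graph obtained from the disjoint union of `G 0, G 1, G 2` by adding a new vertex
(`none`) adjacent to the chosen vertex `v i` of each `G i`. -/
def glueGraph {Vs : Fin 3 → Type} (G : ∀ i, SimpleGraph (Vs i)) (v : ∀ i, Vs i) :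
    SimpleGraph (Option (Σ i, Vs i)) :=
  SimpleGraph.fromRel fun a b =>
    (∃ i x y, a = some ⟨i, x⟩ ∧ b = some ⟨i, y⟩ ∧ (G i).Adj x y) ∨
    (a = none ∧ ∃ i, b = some ⟨i, v i⟩)

/-- Auxiliary: along a walk, some vertex lies in every intermediate bag. -/
lemma cross {V : Type*} {G : SimpleGraph V} {p : ℕ} {B : Fin p → Set V}
    (hB : IsPathDecompOn G Set.univ p B) {a b : V} (W : G.Walk a b)
    {j ja jb : Fin p} (hja : ja ≤ j) (hjb : j ≤ jb)
    (ha : a ∈ B ja) (hb : b ∈ B jb) : ∃ u ∈ W.support, u ∈ B j := by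
  induction W generalizing ja with
  | @nil x => exact ⟨x, by simp, hB.2.2.2 x ja j jb hja hjb ha hb⟩
  | @cons x c y h W' ih =>
    obtain ⟨j', hx, hc⟩ := hB.2.2.1 h trivial trivial
    rcases le_total j j' with hle | hle
    · exact ⟨x, by simp, hB.2.2.2 x ja j j' hja hle ha hx⟩
    · obtain ⟨u, hu, hu2⟩ := ih hle hc hb
      exact ⟨u, by simp [hu], hu2⟩

lemma median3 {α : Type*} [LinearOrder α] (a : Fin 3 → α) :
    ∃ m l r : Fin 3, l ≠ m ∧ r ≠ m ∧ a l ≤ a m ∧ a m ≤ a r := by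
  rcases le_total (a 0) (a 1) with h01 | h01 <;>
  rcases le_total (a 1) (a 2) with h12 | h12 <;>
  rcases le_total (a 0) (a 2) with h02 | h02
  · exact ⟨1, 0, 2, by decide, by decide, h01, h12⟩
  · exact ⟨1, 0, 2, by decide, by decide, h01, h12⟩
  · exact ⟨2, 0, 1, by decide, by decide, h02, h12⟩
  · exact ⟨0, 2, 1, by decide, by decide, h02, h01⟩
  · exact ⟨0, 1, 2, by decide, by decide, h01, h02⟩
  · exact ⟨2, 1, 0, by decide, by decide, h12, h02⟩
  · exact ⟨1, 2, 0, by decide, by decide, h12, h01⟩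
  · exact ⟨1, 2, 0, by decide, by decide, h12, h01⟩

def glueHom {Vs : Fin 3 → Type} (G : ∀ i, SimpleGraph (Vs i)) (v : ∀ i, Vs i) (i : Fin 3) :
    G i →g glueGraph G v where
  toFun x := some ⟨i, x⟩
  map_rel' := by
    intro x y h
    exact ⟨by simp [h.ne], Or.inl (Or.inl ⟨i, x, y, rfl, rfl, h⟩)⟩

lemma glue_edge {Vs : Fin 3 → Type} (G : ∀ i, SimpleGraph (Vs i)) (v : ∀ i, Vs i) (i : Fin 3) :
    (glueGraph G v).Adj none (some ⟨i, v i⟩) :=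
  ⟨by simp, Or.inl (Or.inr ⟨rfl, i, rfl⟩)⟩

/-- If `G 0, G 1, G 2` are connected graphs each with pathwidth at least `k`, then adding a
new vertex adjacent to one vertex of each yields a graph of pathwidth at least `k + 1`. -/
theorem pathwidth_glue {Vs : Fin 3 → Type} [∀ i, Fintype (Vs i)]
    (G : ∀ i, SimpleGraph (Vs i)) (v : ∀ i, Vs i) (k : ℕ)
    (hconn : ∀ i, (G i).Connected) (hpw : ∀ i, k ≤ pathwidth (G i)) :
    k + 1 ≤ pathwidth (glueGraph G v) := by
  classical
  rw [pathwidth]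
  have hne : {t | ∃ p, ∃ B : Fin p → Set (Option (Σ i, Vs i)),
      IsPathDecompOn (glueGraph G v) Set.univ p B ∧ ∀ i, (B i).ncard ≤ t + 1}.Nonempty := by
    refine ⟨Fintype.card (Option (Σ i, Vs i)), 1, fun _ => Set.univ, ?_, ?_⟩
    · exact ⟨fun _ => subset_rfl, fun x _ => ⟨0, trivial⟩,
        fun u w _ _ _ => ⟨0, trivial, trivial⟩, fun _ _ _ _ _ _ _ h => trivial⟩
    · intro i
      rw [Set.ncard_univ, Nat.card_eq_fintype_card]
      omega
  apply le_csInf hne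
  rintro t ⟨p, B, hB, hsize⟩
  -- restricted bags
  set C : ∀ _ : Fin 3, Fin p → Set (Vs _) := fun i j => {x : Vs i | some ⟨i, x⟩ ∈ B j} with hCdef
  have hC : ∀ i, IsPathDecompOn (G i) Set.univ p (C i) := by
    intro i
    refine ⟨fun _ => subset_univ _, ?_, ?_, ?_⟩
    · intro x _; exact hB.2.1 (some ⟨i, x⟩) trivial
    · intro x y hxy _ _
      exact hB.2.2.1 ((glueHom G v i).map_rel hxy) trivial trivial
    · intro x j1 j2 j3 h12 h23 h1 h3
      exact hB.2.2.2 (some ⟨i, x⟩) j1 j2 j3 h12 h23 h1 h3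
  -- each part has a heavy bag
  have heavy : ∀ i, ∃ j, k + 1 ≤ (C i j).ncard := by
    intro i
    by_contra h
    push_neg at h
    rcases Nat.eq_zero_or_pos k with hk | hk
    · obtain ⟨j, hj⟩ := (hC i).2.1 (v i) trivial
      have := h j
      rw [hk] at this
      have hz : (C i j).ncard = 0 := by omega
      rw [Set.ncard_eq_zero (Set.toFinite _)] at hz
      rw [hz] at hj
      exact hj
    · have hle : pathwidth (G i) ≤ k - 1 := by
        apply Nat.sInf_le
        exact ⟨p, C i, hC i, fun j => by have := h j; omega⟩
      have := hpw i
      omega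
  choose a ha using heavy
  obtain ⟨m, l, r, hlm, hrm, hle1, hle2⟩ := median3 a
  obtain ⟨ja, hja⟩ := hB.2.1 none trivial
  -- find an extra vertex in bag B (a m)
  have extra : ∃ u ∈ B (a m), (u = none ∨ ∃ i x, i ≠ m ∧ u = some ⟨i, x⟩) := by
    rcases le_total ja (a m) with hside | hside
    · -- none's bag is left of a m; walk from none right to heavy vertex of part r
      obtain ⟨w, hw⟩ := Set.nonempty_of_ncard_ne_zero
        (by have := ha r; omega : (C r (a r)).ncard ≠ 0)
      obtain ⟨Wr⟩ := (hconn r).preconnected (v r) w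
      obtain ⟨u, hu, hu2⟩ := cross hB
        (Walk.cons (glue_edge G v r) (Wr.map (glueHom G v r))) hside hle2 hja hw
      refine ⟨u, hu2, ?_⟩
      erw [Walk.support_cons, List.mem_cons] at hu
      rcases hu with rfl | hu
      · exact Or.inl rfl
      · erw [Walk.support_map, List.mem_map] at hu
        obtain ⟨x, _, rfl⟩ := hu
        exact Or.inr ⟨r, x, fun h => hrm h, rfl⟩
    · -- none's bag is right of a m; walk from heavy vertex of part l to none
      obtain ⟨w, hw⟩ := Set.nonempty_of_ncard_ne_zero
        (by have := ha l; omega : (C l (a l)).ncard ≠ 0)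
      obtain ⟨Wl⟩ := (hconn l).preconnected (v l) w
      obtain ⟨u, hu, hu2⟩ := cross hB
        (Walk.cons (glue_edge G v l) (Wl.map (glueHom G v l))).reverse hle1 hside hw hja
      refine ⟨u, hu2, ?_⟩
      erw [Walk.support_reverse, List.mem_reverse, Walk.support_cons, List.mem_cons] at hu
      rcases hu with rfl | hu
      · exact Or.inl rfl
      · erw [Walk.support_map, List.mem_map] at hu
        obtain ⟨x, _, rfl⟩ := hu
        exact Or.inr ⟨l, x, fun h => hlm h, rfl⟩
  obtain ⟨u, humem, hukind⟩ := extra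
  -- count
  set S : Set (Option (Σ i, Vs i)) := (fun x => (some ⟨m, x⟩ : Option (Σ i, Vs i))) '' (C m (a m))
    with hSdef
  have hSsub : S ⊆ B (a m) := by
    rintro _ ⟨x, hx, rfl⟩; exact hx
  have hScard : (C m (a m)).ncard ≤ S.ncard := by
    rw [hSdef, Set.ncard_image_of_injective _ (fun x y hxy => by
      simpa using hxy)]
  have huS : u ∉ S := by
    rintro ⟨x, _, rfl⟩
    rcases hukind with h | ⟨i, y, hi, h⟩
    · simp at h
    · rw [Option.some_inj] at h
      exact hi (congrArg Sigma.fst h.symm)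
  have hins : insert u S ⊆ B (a m) := insert_subset humem hSsub
  have h1 : (insert u S).ncard = S.ncard + 1 := Set.ncard_insert_of_notMem huS (Set.toFinite _)
  have h2 : (insert u S).ncard ≤ (B (a m)).ncard := Set.ncard_le_ncard hins (Set.toFinite _)
  have h3 := hsize (a m)
  have h4 := ha m
  omega
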